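/- Fix p ∈ (0,1), λ ∈ [0,1), and constants A > 0, B ≥ 0, e₀ ≥ 0. For each integer h ≥ 1 define e_h = A·(2 + log(h+1))/√(h+1) + B·( (1/(h+1))·Σ_{i=1}^{h+1} λ^i + Σ_{j=1}^{h} (1/(j(j+1)))·Σ_{i=h+1−j}^{h+1} λ^i ). Then the binomial average satisfies Σ_{h=0}^{m} C(m,h)·(1−p)^h·p^{m−h}·e_h = O( (log m)/√m ) as m → ∞; i.e., there exist constants C' > 0 and m₀ such that for all m ≥ m₀ the sum is at most C'·(log m)/√m. -/

import Mathlib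

private lemma sum_inv_sq_succ (n : ℕ) :
    ∑ k ∈ Finset.Icc 1 n, (1:ℝ)/((k:ℝ)+1)^2 ≤ 1 - 1/((n:ℝ)+1) := by
  induction n with
  | zero => simp
  | succ n ih =>
    rw [Finset.sum_Icc_succ_top (by omega)]
    have h1 : (0:ℝ) < (n:ℝ)+1 := by positivity
    have h2 : (0:ℝ) < (n:ℝ)+2 := by positivity
    have key : (1:ℝ)/(((n+1:ℕ):ℝ)+1)^2 ≤ 1/((n:ℝ)+1) - 1/(((n+1:ℕ):ℝ)+1) := by
      push_cast
      rw [div_sub_div _ _ (ne_of_gt h1) (by positivity), div_le_div_iff₀ (by positivity) (by positivity)]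
      nlinarith
    have : 1 - 1/((n:ℝ)+1) + (1/((n:ℝ)+1) - 1/(((n+1:ℕ):ℝ)+1)) = 1 - 1/(((n+1:ℕ):ℝ)+1) := by ring
    push_cast at *
    linarith

private lemma pow_mul_sq_bounded (lam : ℝ) (h0 : 0 ≤ lam) (h1 : lam < 1) :
    ∃ C : ℝ, 0 < C ∧ ∀ n : ℕ, lam ^ n * ((n:ℝ)+1)^2 ≤ C := by
  rcases eq_or_lt_of_le h0 with h|h
  · refine ⟨4, by norm_num, fun n => ?_⟩
    cases n with
    | zero => norm_num
    | succ n =>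
      rw [← h, zero_pow (Nat.succ_ne_zero n), zero_mul]
      norm_num
  · set x : ℝ := (1 - lam)/lam with hx
    have hxpos : 0 < x := div_pos (by linarith) h
    have hlx : lam * (1 + x) = 1 := by
      rw [hx]; field_simp; ring
    refine ⟨4 + 18/x^2, by positivity, fun n => ?_⟩
    have hx18 : (0:ℝ) ≤ 18/x^2 := by positivity
    rcases lt_or_ge n 2 with hn | hn
    · interval_cases n
      · norm_num; linarith
      · have h4 : lam * (((1:ℕ):ℝ)+1)^2 ≤ 4 := by norm_num; nlinarith
        simpa using by linarith [h4]
    · -- binomial lower bound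
      have hadd := add_pow x 1 n
      have hmem : 2 ∈ Finset.range (n+1) := Finset.mem_range.mpr (by omega)
      have hterm : ((n:ℝ)*((n:ℝ)-1)/2) * x^2 ≤ (x+1)^n := by
        have := Finset.single_le_sum (f := fun k => x^k * 1^(n-k) * (n.choose k : ℝ))
          (fun i _ => by positivity) hmem
        rw [← hadd] at this
        calc ((n:ℝ)*((n:ℝ)-1)/2) * x^2 = x^2 * 1^(n-2) * (n.choose 2 : ℝ) := by
              rw [Nat.cast_choose_two]; ring
          _ ≤ (x+1)^n := this
      have hpn : lam^n * (x+1)^n = 1 := by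
        rw [← mul_pow]
        rw [show lam * (x+1) = lam * (1+x) by ring, hlx, one_pow]
      have hlamn : 0 < lam ^ n := by positivity
      have hxn : 0 < (x+1)^n := by positivity
      have h9 : ((n:ℝ)+1)^2 ≤ 9 * ((n:ℝ)*((n:ℝ)-1)/2) := by
        have : (2:ℝ) ≤ (n:ℝ) := by exact_mod_cast hn
        nlinarith
      have hkey : lam^n * ((n:ℝ)*((n:ℝ)-1)/2) * x^2 ≤ 1 := by
        calc lam^n * ((n:ℝ)*((n:ℝ)-1)/2) * x^2 = lam^n * (((n:ℝ)*((n:ℝ)-1)/2) * x^2) := by ring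
          _ ≤ lam^n * (x+1)^n := by
              exact mul_le_mul_of_nonneg_left hterm (le_of_lt hlamn)
          _ = 1 := hpn
      have hfin : lam^n * ((n:ℝ)+1)^2 ≤ 18/x^2 := by
        rw [le_div_iff₀ (by positivity)]
        calc lam^n * ((n:ℝ)+1)^2 * x^2 = (lam^n*x^2)*(((n:ℝ)+1)^2) := by ring
          _ ≤ (lam^n*x^2)*(9*((n:ℝ)*((n:ℝ)-1)/2)) := by
              exact mul_le_mul_of_nonneg_left h9 (by positivity)
          _ = 9*(lam^n*((n:ℝ)*((n:ℝ)-1)/2)*x^2) := by ring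
          _ ≤ 9 := by linarith
          _ ≤ 18 := by norm_num
      linarith

private lemma pointwise_bound (lam : ℝ) (hlam0 : 0 ≤ lam) (hlam1 : lam < 1)
    (C₂ : ℝ) (hC₂ : 0 < C₂) (hC : ∀ n : ℕ, lam ^ n ≤ C₂ / ((n:ℝ)+1)^2)
    (A B : ℝ) (hA : 0 ≤ A) (hB : 0 ≤ B) (h : ℕ) (hh : 1 ≤ h) :
    A * (2 + Real.log ((h : ℝ) + 1)) / Real.sqrt ((h : ℝ) + 1)
        + B * ((1 / ((h : ℝ) + 1)) * (∑ i ∈ Finset.Icc 1 (h + 1), lam ^ i)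
            + ∑ j ∈ Finset.Icc 1 h,
                (1 / ((j : ℝ) * ((j : ℝ) + 1))) *
                  ∑ i ∈ Finset.Icc (h + 1 - j) (h + 1), lam ^ i)
      ≤ (A + 2*B*C₂) * (2 + Real.log ((h : ℝ) + 1)) / Real.sqrt ((h : ℝ) + 1) := by
  have hh1 : (1:ℝ) ≤ (h:ℝ) := by exact_mod_cast hh
  have hhp : (0:ℝ) < (h:ℝ)+1 := by linarith
  have hhp2 : (0:ℝ) < (h:ℝ)+2 := by linarith
  set L : ℝ := 2 + Real.log ((h:ℝ)+1) with hLdef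
  set S : ℝ := Real.sqrt ((h:ℝ)+1) with hSdef
  have hL2 : 2 ≤ L := by
    have : 0 ≤ Real.log ((h:ℝ)+1) := Real.log_nonneg (by linarith)
    simp [hLdef]; linarith
  have hS1 : 1 ≤ S := Real.one_le_sqrt.mpr (by linarith)
  have hS0 : 0 < S := by linarith
  have hSh : S ≤ (h:ℝ)+1 := by
    have h2 := Real.sqrt_le_sqrt (show (h:ℝ)+1 ≤ ((h:ℝ)+1)^2 by nlinarith)
    rwa [Real.sqrt_sq (by linarith)] at h2
  -- T1 bound
  have hT1sum : (∑ i ∈ Finset.Icc 1 (h + 1), lam ^ i) ≤ C₂ := by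
    calc (∑ i ∈ Finset.Icc 1 (h + 1), lam ^ i)
        ≤ ∑ i ∈ Finset.Icc 1 (h + 1), C₂ * (1/((i:ℝ)+1)^2) := by
          refine Finset.sum_le_sum fun i _ => ?_
          have := hC i
          rw [mul_one_div]
          exact this
      _ = C₂ * ∑ i ∈ Finset.Icc 1 (h + 1), (1:ℝ)/((i:ℝ)+1)^2 := by rw [Finset.mul_sum]
      _ ≤ C₂ * 1 := by
          refine mul_le_mul_of_nonneg_left ?_ hC₂.le
          have := sum_inv_sq_succ (h+1)
          have h2 : (0:ℝ) < ((h+1:ℕ):ℝ)+1 := by positivity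
          have : (0:ℝ) ≤ 1/(((h+1:ℕ):ℝ)+1) := by positivity
          have := sum_inv_sq_succ (h+1)
          linarith
      _ = C₂ := mul_one C₂
  have hT1 : (1 / ((h : ℝ) + 1)) * (∑ i ∈ Finset.Icc 1 (h + 1), lam ^ i) ≤ C₂/((h:ℝ)+1) := by
    rw [div_eq_mul_one_div C₂ ((h:ℝ)+1), mul_comm C₂]
    refine mul_le_mul_of_nonneg_left hT1sum (by positivity)
  -- T2 bound
  have hmain : ∀ j ∈ Finset.Icc 1 h,
      (1 / ((j : ℝ) * ((j : ℝ) + 1))) * ∑ i ∈ Finset.Icc (h + 1 - j) (h + 1), lam ^ i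
        ≤ C₂*(1/((h:ℝ)+2))^2*(1/(j:ℝ)) + C₂*(1/((h:ℝ)+2))^2*(1/((h:ℝ)+2-(j:ℝ)))
            + C₂*(1/((h:ℝ)+2))*(1/((h:ℝ)+2-(j:ℝ))^2) := by
    intro j hj
    obtain ⟨hj1, hjh⟩ := Finset.mem_Icc.mp hj
    have hjr : (1:ℝ) ≤ (j:ℝ) := by exact_mod_cast hj1
    have hjhr : (j:ℝ) ≤ (h:ℝ) := by exact_mod_cast hjh
    have hb : (0:ℝ) < (h:ℝ)+2-(j:ℝ) := by linarith
    have hcast : ((h + 1 - j : ℕ) : ℝ) = (h:ℝ)+1-(j:ℝ) := by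
      have : j ≤ h + 1 := by omega
      push_cast [Nat.cast_sub this]
      ring
    have hinner : ∑ i ∈ Finset.Icc (h + 1 - j) (h + 1), lam ^ i
        ≤ ((j:ℝ)+1) * (C₂/((h:ℝ)+2-(j:ℝ))^2) := by
      have hcard : (Finset.Icc (h + 1 - j) (h + 1)).card = j + 1 := by
        rw [Nat.card_Icc]; omega
      have hstep : ∀ i ∈ Finset.Icc (h + 1 - j) (h + 1), lam ^ i ≤ C₂/((h:ℝ)+2-(j:ℝ))^2 := by
        intro i hi
        obtain ⟨hi1, _⟩ := Finset.mem_Icc.mp hi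
        calc lam ^ i ≤ lam ^ (h + 1 - j) := pow_le_pow_of_le_one hlam0 hlam1.le hi1
          _ ≤ C₂ / (((h + 1 - j : ℕ):ℝ)+1)^2 := hC _
          _ = C₂/((h:ℝ)+2-(j:ℝ))^2 := by rw [hcast]; ring_nf
      calc ∑ i ∈ Finset.Icc (h + 1 - j) (h + 1), lam ^ i
          ≤ (Finset.Icc (h + 1 - j) (h + 1)).card • (C₂/((h:ℝ)+2-(j:ℝ))^2) :=
            Finset.sum_le_card_nsmul _ _ _ hstep
        _ = ((j:ℝ)+1) * (C₂/((h:ℝ)+2-(j:ℝ))^2) := by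
            rw [hcard, nsmul_eq_mul]; push_cast; ring
    calc (1 / ((j : ℝ) * ((j : ℝ) + 1))) * ∑ i ∈ Finset.Icc (h + 1 - j) (h + 1), lam ^ i
        ≤ (1 / ((j : ℝ) * ((j : ℝ) + 1))) * (((j:ℝ)+1) * (C₂/((h:ℝ)+2-(j:ℝ))^2)) := by
          refine mul_le_mul_of_nonneg_left hinner (by positivity)
      _ = C₂*(1/((h:ℝ)+2))^2*(1/(j:ℝ)) + C₂*(1/((h:ℝ)+2))^2*(1/((h:ℝ)+2-(j:ℝ)))
            + C₂*(1/((h:ℝ)+2))*(1/((h:ℝ)+2-(j:ℝ))^2) := by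
          field_simp
          ring
  have hs1 : ∑ j ∈ Finset.Icc 1 h, (1:ℝ)/(j:ℝ) ≤ (h:ℝ) := by
    calc ∑ j ∈ Finset.Icc 1 h, (1:ℝ)/(j:ℝ)
        ≤ (Finset.Icc 1 h).card • (1:ℝ) := by
          refine Finset.sum_le_card_nsmul _ _ _ fun j hj => ?_
          obtain ⟨hj1, _⟩ := Finset.mem_Icc.mp hj
          have : (1:ℝ) ≤ (j:ℝ) := by exact_mod_cast hj1
          rw [div_le_one (by linarith)]; exact this
      _ = (h:ℝ) := by rw [Nat.card_Icc, Nat.add_sub_cancel, nsmul_eq_mul, mul_one]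
  have hs2 : ∑ j ∈ Finset.Icc 1 h, (1:ℝ)/((h:ℝ)+2-(j:ℝ)) ≤ (h:ℝ) := by
    calc ∑ j ∈ Finset.Icc 1 h, (1:ℝ)/((h:ℝ)+2-(j:ℝ))
        ≤ (Finset.Icc 1 h).card • (1:ℝ) := by
          refine Finset.sum_le_card_nsmul _ _ _ fun j hj => ?_
          obtain ⟨_, hjh⟩ := Finset.mem_Icc.mp hj
          have : (j:ℝ) ≤ (h:ℝ) := by exact_mod_cast hjh
          rw [div_le_one (by linarith)]; linarith
      _ = (h:ℝ) := by rw [Nat.card_Icc, Nat.add_sub_cancel, nsmul_eq_mul, mul_one]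
  have hs3 : ∑ j ∈ Finset.Icc 1 h, (1:ℝ)/((h:ℝ)+2-(j:ℝ))^2 ≤ 1 := by
    have hbij : ∑ j ∈ Finset.Icc 1 h, (1:ℝ)/((h:ℝ)+2-(j:ℝ))^2
        = ∑ k ∈ Finset.Icc 1 h, (1:ℝ)/((k:ℝ)+1)^2 := by
      refine Finset.sum_nbij' (fun j => h + 1 - j) (fun k => h + 1 - k) ?_ ?_ ?_ ?_ ?_
      · intro a ha; obtain ⟨h1, h2⟩ := Finset.mem_Icc.mp ha
        simp only [Finset.mem_Icc]; omega
      · intro a ha; obtain ⟨h1, h2⟩ := Finset.mem_Icc.mp ha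
        simp only [Finset.mem_Icc]; omega
      · intro a ha; obtain ⟨h1, h2⟩ := Finset.mem_Icc.mp ha
        show h + 1 - (h + 1 - a) = a; omega
      · intro a ha; obtain ⟨h1, h2⟩ := Finset.mem_Icc.mp ha
        show h + 1 - (h + 1 - a) = a; omega
      · intro a ha
        obtain ⟨h1, h2⟩ := Finset.mem_Icc.mp ha
        have hc : ((h + 1 - a : ℕ):ℝ) = (h:ℝ)+1-(a:ℝ) := by
          have : a ≤ h + 1 := by omega
          push_cast [Nat.cast_sub this]; ring
        rw [hc]
        ring_nf
    rw [hbij]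
    have := sum_inv_sq_succ h
    have : (0:ℝ) ≤ 1/((h:ℝ)+1) := by positivity
    have := sum_inv_sq_succ h
    linarith
  have hT2 : ∑ j ∈ Finset.Icc 1 h,
      (1 / ((j : ℝ) * ((j : ℝ) + 1))) * ∑ i ∈ Finset.Icc (h + 1 - j) (h + 1), lam ^ i
        ≤ 3*C₂/((h:ℝ)+2) := by
    calc ∑ j ∈ Finset.Icc 1 h,
          (1 / ((j : ℝ) * ((j : ℝ) + 1))) * ∑ i ∈ Finset.Icc (h + 1 - j) (h + 1), lam ^ i
        ≤ ∑ j ∈ Finset.Icc 1 h, (C₂*(1/((h:ℝ)+2))^2*(1/(j:ℝ))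
            + C₂*(1/((h:ℝ)+2))^2*(1/((h:ℝ)+2-(j:ℝ)))
            + C₂*(1/((h:ℝ)+2))*(1/((h:ℝ)+2-(j:ℝ))^2)) := Finset.sum_le_sum hmain
      _ = C₂*(1/((h:ℝ)+2))^2 * (∑ j ∈ Finset.Icc 1 h, (1:ℝ)/(j:ℝ))
            + C₂*(1/((h:ℝ)+2))^2 * (∑ j ∈ Finset.Icc 1 h, (1:ℝ)/((h:ℝ)+2-(j:ℝ)))
            + C₂*(1/((h:ℝ)+2)) * (∑ j ∈ Finset.Icc 1 h, (1:ℝ)/((h:ℝ)+2-(j:ℝ))^2) := by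
          rw [Finset.sum_add_distrib, Finset.sum_add_distrib, Finset.mul_sum, Finset.mul_sum,
            Finset.mul_sum]
      _ ≤ C₂*(1/((h:ℝ)+2))^2 * (h:ℝ) + C₂*(1/((h:ℝ)+2))^2 * (h:ℝ) + C₂*(1/((h:ℝ)+2)) * 1 := by
          gcongr <;> positivity
      _ ≤ 3*C₂/((h:ℝ)+2) := by
          have hcomp : (1/((h:ℝ)+2))^2*(h:ℝ) ≤ 1/((h:ℝ)+2) := by
            have he : (1/((h:ℝ)+2))^2*(h:ℝ) = (h:ℝ)/((h:ℝ)+2)^2 := by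
              rw [div_pow, one_pow, div_mul_eq_mul_div, one_mul]
            rw [he, div_le_div_iff₀ (by positivity) hhp2]
            nlinarith
          have h1 : C₂*((1/((h:ℝ)+2))^2*(h:ℝ)) ≤ C₂*(1/((h:ℝ)+2)) :=
            mul_le_mul_of_nonneg_left hcomp hC₂.le
          have he2 : 3*C₂/((h:ℝ)+2) = C₂*(1/((h:ℝ)+2)) + C₂*(1/((h:ℝ)+2)) + C₂*(1/((h:ℝ)+2)) := by
            ring
          nlinarith [h1]
  -- assemble
  have hd1 : C₂/((h:ℝ)+1) + 3*C₂/((h:ℝ)+2) ≤ 4*C₂/((h:ℝ)+1) := by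
    have h5 : 3*C₂/((h:ℝ)+2) ≤ 3*C₂/((h:ℝ)+1) := by
      apply div_le_div_of_nonneg_left (by positivity) hhp (by linarith)
    have h4 : 4*C₂/((h:ℝ)+1) = C₂/((h:ℝ)+1) + 3*C₂/((h:ℝ)+1) := by ring
    linarith
  have hd2 : 4*C₂/((h:ℝ)+1) ≤ 4*C₂/S :=
    div_le_div_of_nonneg_left (by positivity) hS0 hSh
  have hd3 : 4*C₂/S ≤ 2*C₂*L/S := by
    rw [div_le_div_iff₀ hS0 hS0]
    nlinarith [mul_pos hC₂ hS0]
  have hbt : B * ((1 / ((h : ℝ) + 1)) * (∑ i ∈ Finset.Icc 1 (h + 1), lam ^ i)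
      + ∑ j ∈ Finset.Icc 1 h, (1 / ((j : ℝ) * ((j : ℝ) + 1))) *
          ∑ i ∈ Finset.Icc (h + 1 - j) (h + 1), lam ^ i) ≤ 2*B*C₂*L/S := by
    calc B * ((1 / ((h : ℝ) + 1)) * (∑ i ∈ Finset.Icc 1 (h + 1), lam ^ i)
          + ∑ j ∈ Finset.Icc 1 h, (1 / ((j : ℝ) * ((j : ℝ) + 1))) *
              ∑ i ∈ Finset.Icc (h + 1 - j) (h + 1), lam ^ i)
        ≤ B * (2*C₂*L/S) := by
          refine mul_le_mul_of_nonneg_left ?_ hB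
          linarith
      _ = 2*B*C₂*L/S := by ring
  have hsplit : (A + 2*B*C₂) * L / S = A*L/S + 2*B*C₂*L/S := by ring
  have hAL : A * (2 + Real.log ((h : ℝ) + 1)) / Real.sqrt ((h : ℝ) + 1) = A*L/S := rfl
  rw [hAL, show (A + 2*B*C₂) * (2 + Real.log ((h : ℝ) + 1)) / Real.sqrt ((h : ℝ) + 1)
    = (A + 2*B*C₂) * L / S from rfl, hsplit]
  linarith


set_option maxHeartbeats 1000000 in
/-- Asymptotic convergence rate of the skipping scheme: for the error
bounds `e_h = A·(2+log(h+1))/√(h+1)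
        + B·((1/(h+1))·Σ_{i=1}^{h+1} λⁱ + Σ_{j=1}^{h} (1/(j(j+1)))·Σ_{i=h+1−j}^{h+1} λⁱ)`
(for `h ≥ 1`, with `e_0 = e₀`), the binomial average satisfies
`Σ_{h=0}^{m} C(m,h)·(1−p)ʰ·p^{m−h}·e_h = O((log m)/√m)` as `m → ∞`. -/
theorem skipping_scheme_binomial_average_rate
    (p lam : ℝ) (hp0 : 0 < p) (hp1 : p < 1) (hlam0 : 0 ≤ lam) (hlam1 : lam < 1)
    (A B e₀ : ℝ) (hA : 0 < A) (hB : 0 ≤ B) (he₀ : 0 ≤ e₀)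
    (e : ℕ → ℝ) (he0 : e 0 = e₀)
    (he : ∀ h : ℕ, 1 ≤ h →
      e h = A * (2 + Real.log ((h : ℝ) + 1)) / Real.sqrt ((h : ℝ) + 1)
        + B * ((1 / ((h : ℝ) + 1)) * (∑ i ∈ Finset.Icc 1 (h + 1), lam ^ i)
            + ∑ j ∈ Finset.Icc 1 h,
                (1 / ((j : ℝ) * ((j : ℝ) + 1))) *
                  ∑ i ∈ Finset.Icc (h + 1 - j) (h + 1), lam ^ i)) :
    ∃ C' : ℝ, 0 < C' ∧ ∃ m₀ : ℕ, ∀ m : ℕ, m₀ ≤ m →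
      ∑ h ∈ Finset.range (m + 1),
          (m.choose h : ℝ) * (1 - p) ^ h * p ^ (m - h) * e h
        ≤ C' * Real.log m / Real.sqrt m := by
  obtain ⟨C₂, hC₂, hCb⟩ := pow_mul_sq_bounded lam hlam0 hlam1
  have hC : ∀ n : ℕ, lam ^ n ≤ C₂ / ((n:ℝ)+1)^2 := fun n => by
    rw [le_div_iff₀ (by positivity)]; exact hCb n
  obtain ⟨q, hqdef⟩ : ∃ q : ℝ, q = 1 - p := ⟨_, rfl⟩
  have hq0 : 0 < q := by rw [hqdef]; linarith
  obtain ⟨K, hKdef⟩ : ∃ K : ℝ, K = A + 2*B*C₂ + e₀/2 + 1 := ⟨_, rfl⟩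
  have hBC : 0 ≤ B * C₂ := mul_nonneg hB hC₂.le
  have hK0 : 0 < K := by nlinarith [hBC, hKdef]
  -- pointwise bound on e
  have hKe : ∀ h : ℕ, e h ≤ K * (2 + Real.log ((h:ℝ)+1)) / Real.sqrt ((h:ℝ)+1) := by
    intro h
    rcases Nat.eq_zero_or_pos h with h0 | h1
    · subst h0
      rw [he0]
      norm_num [Real.log_one]
      nlinarith [hBC, hKdef]
    · rw [he h h1]
      refine le_trans (pointwise_bound lam hlam0 hlam1 C₂ hC₂ hC A B hA.le hB h h1) ?_
      have hL0 : (0:ℝ) ≤ 2 + Real.log ((h:ℝ)+1) := by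
        have : (0:ℝ) ≤ Real.log ((h:ℝ)+1) := Real.log_nonneg (by
          have : (0:ℝ) ≤ (h:ℝ) := Nat.cast_nonneg h
          linarith)
        linarith
      have hS0 : (0:ℝ) < Real.sqrt ((h:ℝ)+1) := Real.sqrt_pos.mpr (by positivity)
      gcongr
      nlinarith [hBC, hKdef, he₀]
  refine ⟨4*K/Real.sqrt q, by positivity, 3, fun m hm => ?_⟩
  have hm3 : (3:ℝ) ≤ (m:ℝ) := by exact_mod_cast hm
  have hm0 : (0:ℝ) < (m:ℝ) := by linarith
  obtain ⟨w, hwdef⟩ : ∃ w : ℕ → ℝ, ∀ h, w h = (m.choose h : ℝ) * q ^ h * p ^ (m - h) :=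
    ⟨_, fun _ => rfl⟩
  have hw0 : ∀ h, 0 ≤ w h := fun h => by
    rw [hwdef h]; positivity
  -- sum of weights is 1
  have hsum1 : ∑ h ∈ Finset.range (m + 1), w h = 1 := by
    have h1 := add_pow q p m
    rw [show q + p = 1 by rw [hqdef]; ring, one_pow] at h1
    calc ∑ h ∈ Finset.range (m + 1), w h
        = ∑ h ∈ Finset.range (m + 1), q ^ h * p ^ (m - h) * (m.choose h : ℝ) :=
          Finset.sum_congr rfl fun h _ => by rw [hwdef h]; ring
      _ = 1 := h1.symm
  -- expectation of 1/(h+1)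
  have hsum2 : ∑ h ∈ Finset.range (m + 1), w h * (1/((h:ℝ)+1)) ≤ 1/(((m:ℝ)+1)*q) := by
    obtain ⟨f, hfdef⟩ : ∃ f : ℕ → ℝ,
        ∀ k, f k = ((m+1).choose k : ℝ) * q ^ k * p ^ ((m+1) - k) := ⟨_, fun _ => rfl⟩
    have hterm : ∀ h ∈ Finset.range (m+1),
        w h * (1/((h:ℝ)+1)) = (1/(((m:ℝ)+1)*q)) * f (h+1) := by
      intro h hh
      have hhm : h ≤ m := Nat.lt_succ_iff.mp (Finset.mem_range.mp hh)
      have hcc : ((m:ℝ)+1) * (m.choose h:ℝ) = ((m+1).choose (h+1):ℝ) * ((h:ℝ)+1) := by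
        exact_mod_cast congrArg (Nat.cast (R := ℝ)) (Nat.add_one_mul_choose_eq m h)
      have hsub : (m+1) - (h+1) = m - h := by omega
      rw [hwdef h, hfdef (h+1), hsub]
      have hh1 : ((h:ℝ)+1) ≠ 0 := by positivity
      have hm1 : ((m:ℝ)+1) ≠ 0 := by positivity
      rw [mul_one_div, one_div_mul_eq_div, div_eq_div_iff (by positivity) (by positivity)]
      linear_combination (q^h * q * p^(m-h)) * hcc
    rw [Finset.sum_congr rfl hterm, ← Finset.mul_sum]
    have hfs : ∑ h ∈ Finset.range (m+1), f (h+1) ≤ 1 := by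
      have h2 := Finset.sum_range_succ' f (m+1)
      have h3 : ∑ k ∈ Finset.range (m+2), f k = 1 := by
        have h4 := add_pow q p (m+1)
        rw [show q + p = 1 by rw [hqdef]; ring, one_pow] at h4
        calc ∑ k ∈ Finset.range (m+2), f k
            = ∑ k ∈ Finset.range (m+1+1), q ^ k * p ^ (m+1-k) * ((m+1).choose k : ℝ) :=
              Finset.sum_congr rfl fun k _ => by rw [hfdef k]; ring
          _ = 1 := h4.symm
      have hf0 : 0 ≤ f 0 := by rw [hfdef 0]; positivity
      rw [h2] at h3
      linarith
    calc (1/(((m:ℝ)+1)*q)) * ∑ h ∈ Finset.range (m+1), f (h+1)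
        ≤ (1/(((m:ℝ)+1)*q)) * 1 := by
          refine mul_le_mul_of_nonneg_left hfs (by positivity)
      _ = 1/(((m:ℝ)+1)*q) := mul_one _
  -- Cauchy-Schwarz
  have hsum3 : ∑ h ∈ Finset.range (m + 1), w h * (1/Real.sqrt ((h:ℝ)+1))
      ≤ 1/Real.sqrt (((m:ℝ)+1)*q) := by
    obtain ⟨F, hF⟩ : ∃ F : ℕ → ℝ, ∀ h, F h = Real.sqrt (w h) := ⟨_, fun _ => rfl⟩
    obtain ⟨G, hG⟩ : ∃ G : ℕ → ℝ, ∀ h, G h = Real.sqrt (w h) / Real.sqrt ((h:ℝ)+1) :=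
      ⟨_, fun _ => rfl⟩
    have hCS := Finset.sum_mul_sq_le_sq_mul_sq (Finset.range (m+1)) F G
    have hFG : ∀ h ∈ Finset.range (m+1), F h * G h = w h * (1/Real.sqrt ((h:ℝ)+1)) := by
      intro h _
      rw [hF h, hG h, ← mul_div_assoc, Real.mul_self_sqrt (hw0 h), div_eq_mul_one_div]
    have hF2 : ∀ h ∈ Finset.range (m+1), F h ^ 2 = w h := fun h _ => by
      rw [hF h]; exact Real.sq_sqrt (hw0 h)
    have hG2 : ∀ h ∈ Finset.range (m+1), G h ^ 2 = w h * (1/((h:ℝ)+1)) := by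
      intro h _
      rw [hG h, div_pow, Real.sq_sqrt (hw0 h),
        Real.sq_sqrt (by positivity : (0:ℝ) ≤ (h:ℝ)+1), div_eq_mul_one_div]
    rw [Finset.sum_congr rfl hFG, Finset.sum_congr rfl hF2, Finset.sum_congr rfl hG2, hsum1,
      one_mul] at hCS
    have hnn : 0 ≤ ∑ h ∈ Finset.range (m + 1), w h * (1/Real.sqrt ((h:ℝ)+1)) := by
      refine Finset.sum_nonneg fun h _ => mul_nonneg (hw0 h) (by positivity)
    have hle := le_trans hCS hsum2
    have h7 := Real.sqrt_le_sqrt hle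
    rw [Real.sqrt_sq hnn] at h7
    refine le_trans h7 ?_
    rw [one_div, Real.sqrt_inv, one_div]
  -- put everything together
  have hlogmono : ∀ h ∈ Finset.range (m+1),
      w h * e h ≤ (K*(2+Real.log ((m:ℝ)+1))) * (w h * (1/Real.sqrt ((h:ℝ)+1))) := by
    intro h hh
    have hhm : h ≤ m := Nat.lt_succ_iff.mp (Finset.mem_range.mp hh)
    have hhmr : (h:ℝ) ≤ (m:ℝ) := by exact_mod_cast hhm
    have hS0 : (0:ℝ) < Real.sqrt ((h:ℝ)+1) := Real.sqrt_pos.mpr (by positivity)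
    have step1 : w h * e h ≤ w h * (K * (2 + Real.log ((h:ℝ)+1)) / Real.sqrt ((h:ℝ)+1)) :=
      mul_le_mul_of_nonneg_left (hKe h) (hw0 h)
    have hlh : Real.log ((h:ℝ)+1) ≤ Real.log ((m:ℝ)+1) :=
      Real.log_le_log (by positivity) (by linarith)
    have step2 : w h * (K * (2 + Real.log ((h:ℝ)+1)) / Real.sqrt ((h:ℝ)+1))
        ≤ (K*(2+Real.log ((m:ℝ)+1))) * (w h * (1/Real.sqrt ((h:ℝ)+1))) := by
      have he1 : w h * (K * (2 + Real.log ((h:ℝ)+1)) / Real.sqrt ((h:ℝ)+1))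
          = (K*(2+Real.log ((h:ℝ)+1))) * (w h * (1/Real.sqrt ((h:ℝ)+1))) := by ring
      rw [he1]
      refine mul_le_mul_of_nonneg_right ?_ (mul_nonneg (hw0 h) (by positivity))
      nlinarith [hK0.le]
    exact le_trans step1 step2
  have hmain : ∑ h ∈ Finset.range (m + 1), w h * e h
      ≤ (K*(2+Real.log ((m:ℝ)+1))) * (1/Real.sqrt (((m:ℝ)+1)*q)) := by
    calc ∑ h ∈ Finset.range (m + 1), w h * e h
        ≤ ∑ h ∈ Finset.range (m + 1),
            (K*(2+Real.log ((m:ℝ)+1))) * (w h * (1/Real.sqrt ((h:ℝ)+1))) :=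
          Finset.sum_le_sum hlogmono
      _ = (K*(2+Real.log ((m:ℝ)+1)))
            * ∑ h ∈ Finset.range (m + 1), w h * (1/Real.sqrt ((h:ℝ)+1)) := by
          rw [Finset.mul_sum]
      _ ≤ (K*(2+Real.log ((m:ℝ)+1))) * (1/Real.sqrt (((m:ℝ)+1)*q)) := by
          refine mul_le_mul_of_nonneg_left hsum3 ?_
          have : (0:ℝ) ≤ Real.log ((m:ℝ)+1) := Real.log_nonneg (by linarith)
          nlinarith [hK0.le]
  -- numeric estimates for m ≥ 3
  have hlog1 : (1:ℝ) ≤ Real.log m := by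
    rw [Real.le_log_iff_exp_le hm0]
    have := Real.exp_one_lt_d9
    linarith
  have hlogm1 : Real.log ((m:ℝ)+1) ≤ 2*Real.log m := by
    have h2 : Real.log ((m:ℝ)+1) ≤ Real.log ((m:ℝ)^2) :=
      Real.log_le_log (by positivity) (by nlinarith)
    rw [Real.log_pow] at h2
    push_cast at h2
    linarith
  have hsqm : Real.sqrt ((m:ℝ)) ≤ Real.sqrt ((m:ℝ)+1) := Real.sqrt_le_sqrt (by linarith)
  have hsq0 : (0:ℝ) < Real.sqrt (m:ℝ) := Real.sqrt_pos.mpr hm0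
  have hsqq : (0:ℝ) < Real.sqrt q := Real.sqrt_pos.mpr hq0
  have hkey : (K*(2+Real.log ((m:ℝ)+1))) * (1/Real.sqrt (((m:ℝ)+1)*q))
      ≤ (4*K/Real.sqrt q) * Real.log m / Real.sqrt m := by
    rw [Real.sqrt_mul (by positivity) q]
    have hnum : K*(2+Real.log ((m:ℝ)+1)) ≤ 4*K*Real.log m := by nlinarith [hK0.le]
    have hden : Real.sqrt (m:ℝ) * Real.sqrt q ≤ Real.sqrt ((m:ℝ)+1) * Real.sqrt q :=
      mul_le_mul_of_nonneg_right hsqm hsqq.le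
    have hden0 : (0:ℝ) < Real.sqrt (m:ℝ) * Real.sqrt q := by positivity
    have h5 : K*(2+Real.log ((m:ℝ)+1)) * (1/(Real.sqrt ((m:ℝ)+1) * Real.sqrt q))
        = (K*(2+Real.log ((m:ℝ)+1))) / (Real.sqrt ((m:ℝ)+1) * Real.sqrt q) := by ring
    have h6 : (4*K/Real.sqrt q) * Real.log m / Real.sqrt m
        = (4*K*Real.log m) / (Real.sqrt (m:ℝ) * Real.sqrt q) := by
      field_simp
    rw [h5, h6]
    exact div_le_div₀ (by nlinarith [hK0.le]) hnum hden0 hden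
  have hgoal : ∑ h ∈ Finset.range (m + 1),
      (m.choose h : ℝ) * (1 - p) ^ h * p ^ (m - h) * e h
      = ∑ h ∈ Finset.range (m + 1), w h * e h := by
    refine Finset.sum_congr rfl fun h _ => ?_
    rw [hwdef h, hqdef]
  rw [hgoal]
  exact le_trans hmain hkey
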